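/- arXiv:1904.12300 — 3 statements merged into one kernel-verified Lean document; each statement's English description precedes it below -/
import Mathlib

section
/- Fix b > 0 and define θ(Δ) = R·Δ·exp(-a - b·Δ/(1-Δ)) for Δ ∈ (0,1). The unique maximizer of θ on (0,1) is Δ* = 1/(1 + b/2 + √((b/2)·(2 + b/2))). Equivalently, with c = b/2, Δ* = 1/(1 + c + √(c(2+c))). -/
open Set

/-- The unique maximizer of θ(Δ) = R·Δ·exp(-a - b·Δ/(1-Δ)) on (0,1) is
    Δ* = 1/(1 + b/2 + √((b/2)(2 + b/2))). -/
theorem throughput_maximizer (R a b : ℝ) (hR : 0 < R) (ha : 0 ≤ a) (hb : 0 < b) :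
    (1 / (1 + b / 2 + Real.sqrt ((b / 2) * (2 + b / 2)))) ∈ Ioo (0:ℝ) 1 ∧
    ∀ Δ ∈ Ioo (0:ℝ) 1, Δ ≠ 1 / (1 + b / 2 + Real.sqrt ((b / 2) * (2 + b / 2))) →
      R * Δ * Real.exp (-a - b * Δ / (1 - Δ)) <
        R * (1 / (1 + b / 2 + Real.sqrt ((b / 2) * (2 + b / 2)))) *
          Real.exp (-a - b * (1 / (1 + b / 2 + Real.sqrt ((b / 2) * (2 + b / 2)))) /
            (1 - 1 / (1 + b / 2 + Real.sqrt ((b / 2) * (2 + b / 2))))) := by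
  set s := Real.sqrt ((b / 2) * (2 + b / 2)) with hs
  have hs0 : 0 ≤ s := Real.sqrt_nonneg _
  have hs2 : s ^ 2 = (b / 2) * (2 + b / 2) := by
    rw [hs, sq]; exact Real.mul_self_sqrt (by positivity)
  set E := 1 + b / 2 + s with hE
  have hE1 : 1 < E := by rw [hE]; nlinarith
  have hE0 : 0 < E := lt_trans one_pos hE1
  set D := 1 / E with hD
  have hD0 : 0 < D := by positivity
  have hD1 : D < 1 := by rw [hD]; rw [div_lt_one hE0]; exact hE1
  have hDE : D * E = 1 := by rw [hD]; field_simp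
  have hEq : E ^ 2 + 1 = (2 + b) * E := by rw [hE]; linear_combination hs2
  have hsum : D + E = 2 + b := by
    rw [hD]
    field_simp
    linear_combination hEq
  have hfac : ∀ x : ℝ, (1 - x) ^ 2 - b * x = (x - D) * (x - E) := by
    intro x
    linear_combination x * hsum - hDE
  set g : ℝ → ℝ := fun x => Real.log x - b * x / (1 - x) with hg
  have hderiv : ∀ x ∈ Ioo (0:ℝ) 1,
      HasDerivAt g (((1 - x) ^ 2 - b * x) / (x * (1 - x) ^ 2)) x := by
    intro x hx
    have hx0 : (0:ℝ) < x := hx.1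
    have hx1 : x < 1 := hx.2
    have h1x : (1:ℝ) - x ≠ 0 := by linarith [hx1]; 
    have h1 : HasDerivAt Real.log x⁻¹ x := Real.hasDerivAt_log (ne_of_gt hx0)
    have hnum : HasDerivAt (fun y : ℝ => b * y) b x := by
      simpa using (hasDerivAt_id x).const_mul b
    have hden : HasDerivAt (fun y : ℝ => 1 - y) (-1) x := by
      simpa using (hasDerivAt_id x).const_sub 1
    have h2 : HasDerivAt (fun y : ℝ => b * y / (1 - y))
        ((b * (1 - x) - b * x * (-1)) / (1 - x) ^ 2) x := hnum.div hden h1x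
    have h3 := h1.sub h2
    refine h3.congr_deriv ?_
    field_simp
    ring
  have hcont : ∀ x ∈ Ioo (0:ℝ) 1, ContinuousAt g x := fun x hx =>
    (hderiv x hx).continuousAt
  have hEgt : ∀ x : ℝ, x < 1 → x < E := fun x h => lt_trans h hE1
  -- strict mono on Ioc 0 D
  have hmono : StrictMonoOn g (Ioc 0 D) := by
    apply strictMonoOn_of_deriv_pos (convex_Ioc 0 D)
    · intro x hx
      exact (hcont x ⟨hx.1, lt_of_le_of_lt hx.2 hD1⟩).continuousWithinAt
    · intro x hx
      rw [interior_Ioc] at hx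
      have hx01 : x ∈ Ioo (0:ℝ) 1 := ⟨hx.1, lt_trans hx.2 hD1⟩
      rw [(hderiv x hx01).deriv]
      apply div_pos
      · rw [hfac x]
        exact mul_pos_of_neg_of_neg (by linarith [hx.2]) (by linarith [hEgt x hx01.2])
      · exact mul_pos hx01.1 (pow_pos (by linarith [hx01.2]) 2)
  -- strict anti on Ico D 1
  have hanti : StrictAntiOn g (Ico D 1) := by
    apply strictAntiOn_of_deriv_neg (convex_Ico D 1)
    · intro x hx
      exact (hcont x ⟨lt_of_lt_of_le hD0 hx.1, hx.2⟩).continuousWithinAt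
    · intro x hx
      rw [interior_Ico] at hx
      have hx01 : x ∈ Ioo (0:ℝ) 1 := ⟨lt_trans hD0 hx.1, hx.2⟩
      rw [(hderiv x hx01).deriv]
      apply div_neg_of_neg_of_pos
      · rw [hfac x]
        exact mul_neg_of_pos_of_neg (by linarith [hx.1]) (by linarith [hEgt x hx.2])
      · exact mul_pos hx01.1 (pow_pos (by linarith [hx01.2]) 2)
  have hgkey : ∀ Δ ∈ Ioo (0:ℝ) 1, Δ ≠ D → g Δ < g D := by
    intro Δ hΔ hne
    rcases lt_or_gt_of_ne hne with h | h
    · exact hmono ⟨hΔ.1, le_of_lt h⟩ ⟨hD0, le_refl D⟩ h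
    · exact hanti ⟨le_refl D, hD1⟩ ⟨le_of_lt h, hΔ.2⟩ h
  have hrep : ∀ x ∈ Ioo (0:ℝ) 1,
      R * x * Real.exp (-a - b * x / (1 - x)) = R * Real.exp (-a) * Real.exp (g x) := by
    intro x hx
    rw [hg]
    simp only
    rw [Real.exp_sub, Real.exp_sub, Real.exp_log hx.1]
    ring
  constructor
  · exact ⟨hD0, hD1⟩
  · intro Δ hΔ hne
    rw [hrep Δ hΔ, hrep D ⟨hD0, hD1⟩]
    have := Real.exp_lt_exp.mpr (hgkey Δ hΔ hne)
    exact mul_lt_mul_of_pos_left this (by positivity)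
end

section
/- With b = 2c > 0, the maximizer Δ*(c) = 1/(1 + c + √(c(2+c))) of θ(Δ) = R·Δ·exp(-a - 2c·Δ/(1-Δ)) is strictly decreasing in c, and the corresponding maximum throughput θ(Δ*(c)) is strictly decreasing in c. -/
open Set

/-- With b = 2c, both the optimal duty cycle Δ*(c) = 1/(1 + c + √(c(2+c))) and the
    corresponding maximum throughput θ(Δ*(c)) are strictly decreasing in c > 0. -/
theorem maximizer_and_max_throughput_strictAnti (R a : ℝ) (hR : 0 < R) (ha : 0 ≤ a) :
    StrictAntiOn (fun c : ℝ => 1 / (1 + c + Real.sqrt (c * (2 + c)))) (Ioi 0) ∧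
    StrictAntiOn (fun c : ℝ =>
      R * (1 / (1 + c + Real.sqrt (c * (2 + c)))) *
        Real.exp (-a - 2 * c * (1 / (1 + c + Real.sqrt (c * (2 + c)))) /
          (1 - 1 / (1 + c + Real.sqrt (c * (2 + c)))))) (Ioi 0) := by
  have hs : ∀ c : ℝ, 0 < c → 0 < Real.sqrt (c * (2 + c)) := fun c hc =>
    Real.sqrt_pos.mpr (by nlinarith)
  have hΔ : StrictAntiOn (fun c : ℝ => 1 / (1 + c + Real.sqrt (c * (2 + c)))) (Ioi 0) := by
    intro x hx y hy hxy
    have hx0 : (0:ℝ) < x := hx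
    have hy0 : (0:ℝ) < y := hy
    have hsx := hs x hx0
    have hsmono : Real.sqrt (x * (2 + x)) < Real.sqrt (y * (2 + y)) :=
      Real.sqrt_lt_sqrt (by nlinarith) (by nlinarith)
    exact one_div_lt_one_div_of_lt (by linarith) (by linarith)
  refine ⟨hΔ, ?_⟩
  have hrw : ∀ c : ℝ, 0 < c →
      -a - 2 * c * (1 / (1 + c + Real.sqrt (c * (2 + c)))) /
          (1 - 1 / (1 + c + Real.sqrt (c * (2 + c))))
        = -a - 2 * c / (c + Real.sqrt (c * (2 + c))) := by
    intro c hc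
    have hsc := hs c hc
    have hDpos : (0:ℝ) < 1 + c + Real.sqrt (c * (2 + c)) := by linarith
    have hcs : (0:ℝ) < c + Real.sqrt (c * (2 + c)) := by linarith
    have h1 : 1 - 1 / (1 + c + Real.sqrt (c * (2 + c)))
        = (c + Real.sqrt (c * (2 + c))) / (1 + c + Real.sqrt (c * (2 + c))) := by
      rw [one_sub_div hDpos.ne']
      congr 1
      ring
    rw [h1, mul_one_div]
    set s := Real.sqrt (c * (2 + c)) with hsdef
    have h2 : 2 * c / (1 + c + s) / ((c + s) / (1 + c + s)) = 2 * c / (c + s) := by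
      rw [div_div_div_cancel_right₀]
      exact hDpos.ne'
    rw [h2]
  intro x hx y hy hxy
  have hx0 : (0:ℝ) < x := hx
  have hy0 : (0:ℝ) < y := hy
  have hsx := hs x hx0
  have hsy := hs y hy0
  simp only [hrw x hx0, hrw y hy0]
  -- exponent comparison: 2x/(x+sx) < 2y/(y+sy)
  have hcross : x * Real.sqrt (y * (2 + y)) < y * Real.sqrt (x * (2 + x)) := by
    have h2 : (x * Real.sqrt (y * (2 + y))) ^ 2 < (y * Real.sqrt (x * (2 + x))) ^ 2 := by
      have e1 : Real.sqrt (y * (2 + y)) ^ 2 = y * (2 + y) := Real.sq_sqrt (by nlinarith)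
      have e2 : Real.sqrt (x * (2 + x)) ^ 2 = x * (2 + x) := Real.sq_sqrt (by nlinarith)
      nlinarith [e1, e2, mul_pos (mul_pos hx0 hy0) (sub_pos.mpr hxy)]
    exact lt_of_pow_lt_pow_left₀ 2 (by positivity) h2
  have ht : 2 * x / (x + Real.sqrt (x * (2 + x))) < 2 * y / (y + Real.sqrt (y * (2 + y))) := by
    rw [div_lt_div_iff₀ (by linarith) (by linarith)]
    nlinarith
  have hexp : Real.exp (-a - 2 * y / (y + Real.sqrt (y * (2 + y))))
      < Real.exp (-a - 2 * x / (x + Real.sqrt (x * (2 + x)))) :=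
    Real.exp_lt_exp.mpr (by linarith)
  have hΔxy := hΔ hx hy hxy
  simp only at hΔxy
  have hΔy : (0:ℝ) < 1 / (1 + y + Real.sqrt (y * (2 + y))) := by positivity
  have hE1 := Real.exp_pos (-a - 2 * x / (x + Real.sqrt (x * (2 + x))))
  have hE2 := Real.exp_pos (-a - 2 * y / (y + Real.sqrt (y * (2 + y))))
  have key : 1 / (1 + y + Real.sqrt (y * (2 + y))) *
      Real.exp (-a - 2 * y / (y + Real.sqrt (y * (2 + y))))
      < 1 / (1 + x + Real.sqrt (x * (2 + x))) *
      Real.exp (-a - 2 * x / (x + Real.sqrt (x * (2 + x)))) :=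
    mul_lt_mul hΔxy hexp.le hE2 (by positivity)
  calc R * (1 / (1 + y + Real.sqrt (y * (2 + y)))) *
        Real.exp (-a - 2 * y / (y + Real.sqrt (y * (2 + y))))
      = R * (1 / (1 + y + Real.sqrt (y * (2 + y))) *
        Real.exp (-a - 2 * y / (y + Real.sqrt (y * (2 + y))))) := by ring
    _ < R * (1 / (1 + x + Real.sqrt (x * (2 + x))) *
        Real.exp (-a - 2 * x / (x + Real.sqrt (x * (2 + x))))) :=
        mul_lt_mul_of_pos_left key hR
    _ = R * (1 / (1 + x + Real.sqrt (x * (2 + x)))) *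
        Real.exp (-a - 2 * x / (x + Real.sqrt (x * (2 + x)))) := by ring
end

section
/- Let λ, ρ, Q, μ > 0, T > 0, A > 0. Suppose the Laplace transform of the averaged interference Ī is given by L_Ī(z) = exp{−λρ·A·∫_{−∞}^{∞}(1 − μ/(μ + z·h(t)·Q)) dt} with h(t) = max(T−|t|,0)/T. Then L_Ī(z) = exp{−2λρAT·(1 + (μ/(Qz))·ln(μ/(μ + Qz)))} for all z > 0, and substituting ρ = Δ/((1−Δ)T) yields L_Ī(z) = exp{−(2λAΔ/(1−Δ))·(1 + (μ/(Qz))·ln(μ/(μ + Qz)))}. -/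
open MeasureTheory Real

lemma half_integral (Q μ T z : ℝ) (hQ : 0 < Q) (hμ : 0 < μ) (hT : 0 < T) (hz : 0 < z) :
    ∫ t in (0:ℝ)..T, (1 - μ / (μ + z * (max (T - |t|) 0 / T) * Q))
      = T * (1 + μ / (Q * z) * Real.log (μ / (μ + Q * z))) := by
  set c : ℝ := z * Q / T with hc
  have hcpos : 0 < c := by positivity
  have hstep : ∫ t in (0:ℝ)..T, (1 - μ / (μ + z * (max (T - |t|) 0 / T) * Q))
      = ∫ t in (0:ℝ)..T, (1 - μ / (μ + c * (T - t))) := by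
    apply intervalIntegral.integral_congr
    intro t ht
    rw [Set.uIcc_of_le hT.le] at ht
    obtain ⟨h0, h1⟩ := ht
    simp only
    rw [abs_of_nonneg h0, max_eq_left (by linarith)]
    congr 2
    rw [hc]
    field_simp
  rw [hstep]
  have hden : ∀ t ∈ Set.uIcc (0:ℝ) T, 0 < μ + c * (T - t) := by
    intro t ht
    rw [Set.uIcc_of_le hT.le] at ht
    have : 0 ≤ c * (T - t) := mul_nonneg hcpos.le (by linarith [ht.2])
    linarith
  have hderiv : ∀ t ∈ Set.uIcc (0:ℝ) T,
      HasDerivAt (fun t => t + (μ / c) * Real.log (μ + c * (T - t)))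
        (1 - μ / (μ + c * (T - t))) t := by
    intro t ht
    have hpos := hden t ht
    have h1 : HasDerivAt (fun t : ℝ => μ + c * (T - t)) (-c) t := by
      have := (((hasDerivAt_id t).const_sub T).const_mul c).const_add μ
      exact this.congr_deriv (by ring)
    have h2 : HasDerivAt (fun t : ℝ => Real.log (μ + c * (T - t))) (-c / (μ + c * (T-t))) t := by
      have := (Real.hasDerivAt_log hpos.ne').comp t h1
      exact this.congr_deriv (by ring)
    have h3 := (hasDerivAt_id t).add (h2.const_mul (μ / c))
    exact h3.congr_deriv (by field_simp; ring)
  have hcont : ContinuousOn (fun t : ℝ => 1 - μ / (μ + c * (T - t))) (Set.uIcc 0 T) := by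
    apply ContinuousOn.sub continuousOn_const
    apply ContinuousOn.div continuousOn_const (by fun_prop)
    intro t ht; exact (hden t ht).ne'
  rw [intervalIntegral.integral_eq_sub_of_hasDerivAt hderiv
    (hcont.intervalIntegrable)]
  have hμcT : μ + c * T > 0 := by positivity
  have hcT : c * T = Q * z := by rw [hc]; field_simp
  have hμc : μ / c = μ * T / (z * Q) := by rw [hc]; field_simp
  simp only [sub_self, mul_zero, add_zero, sub_zero]
  rw [Real.log_div hμ.ne' (by positivity : (0:ℝ) < μ + Q*z).ne']
  rw [hcT, hμc]
  field_simp
  ring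

lemma full_integral (Q μ T z : ℝ) (hQ : 0 < Q) (hμ : 0 < μ) (hT : 0 < T) (hz : 0 < z) :
    ∫ t : ℝ, (1 - μ / (μ + z * (max (T - |t|) 0 / T) * Q))
      = 2 * T * (1 + μ / (Q * z) * Real.log (μ / (μ + Q * z))) := by
  set f : ℝ → ℝ := fun t => 1 - μ / (μ + z * (max (T - |t|) 0 / T) * Q) with hf
  have hzero : ∀ t : ℝ, T ≤ |t| → f t = 0 := by
    intro t ht
    simp only [hf]
    rw [max_eq_right (by linarith : T - |t| ≤ 0)]
    simp [div_self hμ.ne']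
  have hind : f = Set.indicator (Set.Ioo (-T) T) f := by
    funext t
    by_cases h : |t| < T
    · rw [Set.indicator_of_mem (Set.mem_Ioo.mpr (abs_lt.mp h))]
    · rw [Set.indicator_of_notMem (by simpa [Set.mem_Ioo, ← abs_lt] using h),
        hzero t (not_lt.mp h)]
  have hcont : Continuous f := by
    have hden : ∀ t : ℝ, 0 < μ + z * (max (T - |t|) 0 / T) * Q := by
      intro t
      have h0 : (0:ℝ) ≤ max (T - |t|) 0 := le_max_right _ _
      have : 0 ≤ z * (max (T - |t|) 0 / T) * Q := by positivity
      linarith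
    exact continuous_const.sub (continuous_const.div (by fun_prop) fun t => (hden t).ne')
  have h1 : ∫ t : ℝ, f t = ∫ t in Set.Ioc (-T) T, f t := by
    conv_lhs => rw [hind]
    rw [integral_indicator measurableSet_Ioo, integral_Ioc_eq_integral_Ioo]
  have h2 : ∫ t in Set.Ioc (-T) T, f t = ∫ t in (-T)..T, f t :=
    (intervalIntegral.integral_of_le (by linarith : (-T:ℝ) ≤ T)).symm
  have hadd : (∫ t in (-T)..(0:ℝ), f t) + ∫ t in (0:ℝ)..T, f t = ∫ t in (-T)..T, f t :=
    intervalIntegral.integral_add_adjacent_intervals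
      (hcont.intervalIntegrable _ _) (hcont.intervalIntegrable _ _)
  have hneg : (∫ t in (-T)..(0:ℝ), f t) = ∫ t in (0:ℝ)..T, f t := by
    have h := intervalIntegral.integral_comp_neg (a := 0) (b := T) f
    simp only [neg_zero] at h
    rw [← h]
    apply intervalIntegral.integral_congr
    intro x _
    simp only [hf, abs_neg]
  have hhalf := half_integral Q μ T z hQ hμ hT hz
  rw [h1, h2, ← hadd, hneg, ← hf] at *
  rw [hhalf]
  ring

/-- Proposition 1: if the Laplace transform of the averaged interference satisfies
    L(z) = exp{−λρA∫(1 − μ/(μ + z·h(t)·Q))dt} with h(t) = max(T−|t|,0)/T, then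
    L(z) = exp{−2λρAT(1 + (μ/(Qz))ln(μ/(μ+Qz)))}; substituting ρ = Δ/((1−Δ)T) gives
    L(z) = exp{−(2λAΔ/(1−Δ))(1 + (μ/(Qz))ln(μ/(μ+Qz)))}. -/
theorem poisson_rain_laplace (lam ρ Q μ T A Δ : ℝ) (L : ℝ → ℝ)
    (hlam : 0 < lam) (hρ : 0 < ρ) (hQ : 0 < Q) (hμ : 0 < μ) (hT : 0 < T) (hA : 0 < A)
    (hΔ : Δ ∈ Set.Ioo (0:ℝ) 1)
    (hL : ∀ z : ℝ, 0 < z → L z =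
      Real.exp (-(lam * ρ * A *
        ∫ t : ℝ, (1 - μ / (μ + z * (max (T - |t|) 0 / T) * Q))))) :
    ∀ z : ℝ, 0 < z →
      L z = Real.exp (-(2 * lam * ρ * A * T *
              (1 + μ / (Q * z) * Real.log (μ / (μ + Q * z))))) ∧
      (ρ = Δ / ((1 - Δ) * T) →
        L z = Real.exp (-((2 * lam * A * Δ / (1 - Δ)) *
                (1 + μ / (Q * z) * Real.log (μ / (μ + Q * z)))))) := by
  intro z hz
  have hmain : L z = Real.exp (-(2 * lam * ρ * A * T *
      (1 + μ / (Q * z) * Real.log (μ / (μ + Q * z))))) := by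
    rw [hL z hz, full_integral Q μ T z hQ hμ hT hz]
    congr 1
    ring
  refine ⟨hmain, fun hρ' => ?_⟩
  rw [hmain, hρ']
  congr 1
  have h1Δ : (1:ℝ) - Δ ≠ 0 := sub_ne_zero.mpr (ne_of_gt hΔ.2)
  field_simp
end
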